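/- arXiv:2009.01201 — 3 statements merged into one kernel-verified Lean document; each statement's English description precedes it below -/
import Mathlib

section
/- If there exists a pair (λ̄, μ̄) ∈ H₁ × H₂ such that λ̄ + A*μ̄ = 0 and σ_B(λ̄) + σ_C(μ̄) < 0, then the problem of minimizing ½⟨z, Qz⟩ + ⟨q, z⟩ over z ∈ B subject to Az ∈ C is strongly infeasible; that is, 0 does not belong to the closure of the set {(b − z, c − Az) : b ∈ B, c ∈ C, z ∈ H₁} ⊆ H₁ × H₂. -/
open scoped InnerProductSpace Pointwise Classical
open Filter Topology

noncomputable section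

variable {H₁ H₂ : Type*} [NormedAddCommGroup H₁] [InnerProductSpace ℝ H₁]
  [NormedAddCommGroup H₂] [InnerProductSpace ℝ H₂]

/-- The effective domain of an extended-real-valued function. -/
def fdom {α : Type*} (f : α → EReal) : Set α := {x | f x ≠ ⊤}

/-- The indicator function of a set (0 on the set, `+∞` outside). -/
def indE {α : Type*} (s : Set α) (x : α) : EReal := if x ∈ s then 0 else ⊤

/-- The support function `σ_S(u) = sup_{x ∈ S} ⟪x, u⟫`. -/
def suppF {H : Type*} [NormedAddCommGroup H] [InnerProductSpace ℝ H]
    (s : Set H) (u : H) : EReal :=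
  ⨆ x ∈ s, ((⟪x, u⟫_ℝ : ℝ) : EReal)

/-- The polar cone `S° = {u | ∀ x ∈ S, ⟪x, u⟫ ≤ 0}`. -/
def polarCone {H : Type*} [NormedAddCommGroup H] [InnerProductSpace ℝ H]
    (s : Set H) : Set H := {u | ∀ x ∈ s, ⟪x, u⟫_ℝ ≤ 0}

/-- The recession cone `rec S = {x | ∀ y ∈ S, x + y ∈ S}`. -/
def recCone {H : Type*} [AddCommGroup H] (s : Set H) : Set H :=
  {x | ∀ y ∈ s, x + y ∈ s}

/-- `p` is the metric projection of `x` onto `S`, i.e. `p = P_S x`. -/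
def IsProjOn {H : Type*} [NormedAddCommGroup H] [InnerProductSpace ℝ H]
    (S : Set H) (x p : H) : Prop := p ∈ S ∧ ∀ w ∈ S, dist x p ≤ dist x w

/-- The Fenchel conjugate on the Hilbert product `H₁ × H₂` (with the ℓ²
inner product `⟪(z,y),(λ,μ)⟫ = ⟪z,λ⟫ + ⟪y,μ⟫`). -/
def pConj (f : H₁ × H₂ → EReal) : H₁ × H₂ → EReal :=
  fun u => ⨆ p : H₁ × H₂, ((⟪p.1, u.1⟫_ℝ + ⟪p.2, u.2⟫_ℝ : ℝ) : EReal) - f p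

/-- `f(z, y) = ι_B(z) + ι_C(y)`. -/
def qpF (B : Set H₁) (C : Set H₂) : H₁ × H₂ → EReal :=
  fun p => indE B p.1 + indE C p.2

/-- `g(z, y) = ½⟪z, Qz⟫ + ⟪q, z⟫ + ι_{Az = y}(z, y)`. -/
def qpG (Q : H₁ →L[ℝ] H₁) (q : H₁) (A : H₁ →L[ℝ] H₂) : H₁ × H₂ → EReal :=
  fun p => ((1 / 2 * ⟪p.1, Q p.1⟫_ℝ + ⟪q, p.1⟫_ℝ : ℝ) : EReal) +
    indE {r : H₁ × H₂ | A r.1 = r.2} p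

/-- `v` is the element of minimum norm of `S ⊆ H₁ × H₂` with respect to the
Hilbert (ℓ²) product norm, i.e. `v = P_S 0`. -/
def IsMinNormPointP (S : Set (H₁ × H₂)) (v : H₁ × H₂) : Prop :=
  v ∈ S ∧ ∀ w ∈ S, ‖v.1‖ ^ 2 + ‖v.2‖ ^ 2 ≤ ‖w.1‖ ^ 2 + ‖w.2‖ ^ 2

theorem primal_strong_infeasibility_certificate {H₁ H₂ : Type*}
    [NormedAddCommGroup H₁] [InnerProductSpace ℝ H₁] [FiniteDimensional ℝ H₁]
    [NormedAddCommGroup H₂] [InnerProductSpace ℝ H₂] [FiniteDimensional ℝ H₂]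
    (Q : H₁ →L[ℝ] H₁) (hQsa : IsSelfAdjoint Q) (hQpos : ∀ z : H₁, 0 ≤ ⟪Q z, z⟫_ℝ)
    (q : H₁) (A : H₁ →L[ℝ] H₂)
    (B : Set H₁) (hBne : B.Nonempty) (hBcl : IsClosed B) (hBcv : Convex ℝ B)
    (C : Set H₂) (hCne : C.Nonempty) (hCcl : IsClosed C) (hCcv : Convex ℝ C)
    (lam : H₁) (mu : H₂)
    (hlm : lam + (ContinuousLinearMap.adjoint A) mu = 0)
    (hneg : suppF B lam + suppF C mu < 0)
    : (0 : H₁ × H₂) ∉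
      closure {p : H₁ × H₂ | ∃ b ∈ B, ∃ c ∈ C, ∃ z : H₁, p = (b - z, c - A z)} := by
  obtain ⟨b₀, hb₀⟩ := hBne
  obtain ⟨c₀, hc₀⟩ := hCne
  have hBbot : suppF B lam ≠ ⊥ := by
    have h : ((⟪b₀, lam⟫_ℝ : ℝ) : EReal) ≤ suppF B lam := by unfold suppF; exact le_iSup₂ (f := fun x (_ : x ∈ B) => ((⟪x, lam⟫_ℝ : ℝ) : EReal)) b₀ hb₀
    intro hb; rw [hb] at h; exact (EReal.coe_ne_bot _) (le_bot_iff.mp h)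
  have hCbot : suppF C mu ≠ ⊥ := by
    have h : ((⟪c₀, mu⟫_ℝ : ℝ) : EReal) ≤ suppF C mu := by unfold suppF; exact le_iSup₂ (f := fun x (_ : x ∈ C) => ((⟪x, mu⟫_ℝ : ℝ) : EReal)) c₀ hc₀
    intro hb; rw [hb] at h; exact (EReal.coe_ne_bot _) (le_bot_iff.mp h)
  have hBtop : suppF B lam ≠ ⊤ := by
    intro hb; rw [hb, EReal.top_add_of_ne_bot hCbot] at hneg
    exact (not_lt.mpr le_top) hneg
  have hCtop : suppF C mu ≠ ⊤ := by
    intro hb; rw [hb, EReal.add_top_of_ne_bot hBbot] at hneg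
    exact (not_lt.mpr le_top) hneg
  lift suppF B lam to ℝ using ⟨hBtop, hBbot⟩ with sB hsB
  lift suppF C mu to ℝ using ⟨hCtop, hCbot⟩ with sC hsC
  have hneg' : sB + sC < 0 := by exact_mod_cast hneg
  have hBle : ∀ b ∈ B, ⟪b, lam⟫_ℝ ≤ sB := by
    intro b hb
    have h : ((⟪b, lam⟫_ℝ : ℝ) : EReal) ≤ (sB : EReal) := hsB ▸ (by unfold suppF; exact le_iSup₂ (f := fun x (_ : x ∈ B) => ((⟪x, lam⟫_ℝ : ℝ) : EReal)) b hb)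
    exact_mod_cast h
  have hCle : ∀ c ∈ C, ⟪c, mu⟫_ℝ ≤ sC := by
    intro c hc
    have h : ((⟪c, mu⟫_ℝ : ℝ) : EReal) ≤ (sC : EReal) := hsC ▸ (by unfold suppF; exact le_iSup₂ (f := fun x (_ : x ∈ C) => ((⟪x, mu⟫_ℝ : ℝ) : EReal)) c hc)
    exact_mod_cast h
  set S := {p : H₁ × H₂ | ∃ b ∈ B, ∃ c ∈ C, ∃ z : H₁, p = (b - z, c - A z)} with hS
  have hsub : S ⊆ {p : H₁ × H₂ | ⟪p.1, lam⟫_ℝ + ⟪p.2, mu⟫_ℝ ≤ sB + sC} := by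
    rintro p ⟨b, hb, c, hc, z, rfl⟩
    have hz : ⟪z, lam⟫_ℝ + ⟪A z, mu⟫_ℝ = 0 := by
      rw [← ContinuousLinearMap.adjoint_inner_right A, ← inner_add_right, hlm,
        inner_zero_right]
    have : ⟪b - z, lam⟫_ℝ + ⟪c - A z, mu⟫_ℝ = ⟪b, lam⟫_ℝ + ⟪c, mu⟫_ℝ := by
      rw [inner_sub_left, inner_sub_left]; linarith
    simp only [Set.mem_setOf_eq, this]
    exact add_le_add (hBle b hb) (hCle c hc)
  have hclosed : IsClosed {p : H₁ × H₂ | ⟪p.1, lam⟫_ℝ + ⟪p.2, mu⟫_ℝ ≤ sB + sC} :=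
    isClosed_le (((continuous_fst.inner continuous_const)).add
      ((continuous_snd.inner continuous_const))) continuous_const
  intro h0
  have := closure_minimal hsub hclosed h0
  simp only [Set.mem_setOf_eq, Prod.fst_zero, Prod.snd_zero, inner_zero_left,
    add_zero] at this
  linarith

end
end

section
/- If there exists z̄ ∈ rec B such that Q z̄ = 0, A z̄ ∈ rec C, and ⟨q, z̄⟩ < 0, then the Fenchel dual of the problem of minimizing ½⟨z, Qz⟩ + ⟨q, z⟩ over z ∈ B subject to Az ∈ C is strongly infeasible; that is, 0 does not belong to cl(dom f* + dom g*) ⊆ H₁ × H₂, where f(z,y) = ι_B(z) + ι_C(y) and g(z,y) = ½⟨z, Qz⟩ + ⟨q, z⟩ + ι_{{(z,y) : Az = y}}(z,y) on H₁ × H₂, and f*, g* are their Fenchel conjugates. -/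
open scoped InnerProductSpace Pointwise Classical
open Filter Topology

noncomputable section

variable {H₁ H₂ : Type*} [NormedAddCommGroup H₁] [InnerProductSpace ℝ H₁]
  [NormedAddCommGroup H₂] [InnerProductSpace ℝ H₂]

lemma coef_nonpos_aux {a c M : ℝ} (h : ∀ n : ℕ, a + n * c ≤ M) : c ≤ 0 := by
  by_contra hc
  push_neg at hc
  obtain ⟨n, hn⟩ := exists_nat_gt ((M - a) / c)
  have h2 : (M - a) / c * c < n * c := mul_lt_mul_of_pos_right hn hc
  rw [div_mul_cancel₀ _ (ne_of_gt hc)] at h2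
  have := h n
  linarith

lemma recCone_nsmul_add {H : Type*} [AddCommGroup H] [Module ℝ H] {s : Set H} {z : H}
    (hz : z ∈ recCone s) : ∀ n : ℕ, ∀ y ∈ s, (n : ℝ) • z + y ∈ s := by
  intro n
  induction n with
  | zero => intro y hy; simpa using hy
  | succ n ih =>
    intro y hy
    have : ((n : ℝ) + 1) • z + y = z + ((n : ℝ) • z + y) := by
      rw [add_smul, one_smul]; abel
    push_cast
    rw [this]
    exact hz _ (ih y hy)

theorem dual_strong_infeasibility_certificate {H₁ H₂ : Type*}
    [NormedAddCommGroup H₁] [InnerProductSpace ℝ H₁] [FiniteDimensional ℝ H₁]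
    [NormedAddCommGroup H₂] [InnerProductSpace ℝ H₂] [FiniteDimensional ℝ H₂]
    (Q : H₁ →L[ℝ] H₁) (hQsa : IsSelfAdjoint Q) (hQpos : ∀ z : H₁, 0 ≤ ⟪Q z, z⟫_ℝ)
    (q : H₁) (A : H₁ →L[ℝ] H₂)
    (B : Set H₁) (hBne : B.Nonempty) (hBcl : IsClosed B) (hBcv : Convex ℝ B)
    (C : Set H₂) (hCne : C.Nonempty) (hCcl : IsClosed C) (hCcv : Convex ℝ C)
    (zbar : H₁) (hzB : zbar ∈ recCone B) (hQz : Q zbar = 0)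
    (hAz : A zbar ∈ recCone C) (hqz : ⟪q, zbar⟫_ℝ < 0)
    : (0 : H₁ × H₂) ∉ closure (fdom (pConj (qpF B C)) + fdom (pConj (qpG Q q A))) := by
  classical
  set c₀ : ℝ := ⟪q, zbar⟫_ℝ with hc₀
  set K : Set (H₁ × H₂) := {s | ⟪zbar, s.1⟫_ℝ + ⟪A zbar, s.2⟫_ℝ ≤ c₀} with hK
  have hKcl : IsClosed K := by
    apply isClosed_le _ continuous_const
    exact ((continuous_const.inner continuous_fst).add
      (continuous_const.inner continuous_snd))
  have hsub : fdom (pConj (qpF B C)) + fdom (pConj (qpG Q q A)) ⊆ K := by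
    rintro s hs
    rw [Set.mem_add] at hs
    obtain ⟨u, hu, v, hv, rfl⟩ := hs
    obtain ⟨b, hb⟩ := hBne
    obtain ⟨cc, hcc⟩ := hCne
    -- Part 1 : from u ∈ dom f*
    have hu1 : ⟪zbar, u.1⟫_ℝ + ⟪A zbar, u.2⟫_ℝ ≤ 0 := by
      have hle : ∀ n : ℕ,
          ((⟪b, u.1⟫_ℝ + ⟪cc, u.2⟫_ℝ + n * (⟪zbar, u.1⟫_ℝ + ⟪A zbar, u.2⟫_ℝ) : ℝ) : EReal)
            ≤ pConj (qpF B C) u := by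
        intro n
        have hmem1 : (n : ℝ) • zbar + b ∈ B := recCone_nsmul_add hzB n b hb
        have hmem2 : (n : ℝ) • (A zbar) + cc ∈ C := recCone_nsmul_add hAz n cc hcc
        refine le_iSup_of_le ((n : ℝ) • zbar + b, (n : ℝ) • (A zbar) + cc) ?_
        have hf : qpF B C ((n : ℝ) • zbar + b, (n : ℝ) • (A zbar) + cc) = 0 := by
          simp [qpF, indE, hmem1, hmem2]
        rw [hf, sub_zero]
        apply le_of_eq
        norm_cast
        simp only [inner_add_left, ← Nat.cast_smul_eq_nsmul ℝ, real_inner_smul_left]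
        ring
      set S := pConj (qpF B C) u with hS
      have hStop : S ≠ ⊤ := hu
      have hSbot : S ≠ ⊥ := by
        intro hSb
        have := hle 0
        rw [hSb] at this
        simp at this
      lift S to ℝ using ⟨hStop, hSbot⟩ with M hM
      have hle' : ∀ n : ℕ,
          ⟪b, u.1⟫_ℝ + ⟪cc, u.2⟫_ℝ + n * (⟪zbar, u.1⟫_ℝ + ⟪A zbar, u.2⟫_ℝ) ≤ M := by
        intro n
        exact_mod_cast hle n
      exact coef_nonpos_aux hle'
    -- Part 2 : from v ∈ dom g*
    have hv1 : ⟪zbar, v.1⟫_ℝ + ⟪A zbar, v.2⟫_ℝ ≤ c₀ := by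
      have hle : ∀ n : ℕ,
          ((0 + n * (⟪zbar, v.1⟫_ℝ + ⟪A zbar, v.2⟫_ℝ - c₀) : ℝ) : EReal)
            ≤ pConj (qpG Q q A) v := by
        intro n
        refine le_iSup_of_le ((n : ℝ) • zbar, (n : ℝ) • (A zbar)) ?_
        have hmem : ((n : ℝ) • zbar, (n : ℝ) • (A zbar)) ∈
            {r : H₁ × H₂ | A r.1 = r.2} := by
          simp [Set.mem_setOf_eq, map_smul]
        have hquad : ⟪(n : ℝ) • zbar, Q ((n : ℝ) • zbar)⟫_ℝ = 0 := by
          rw [map_smul, hQz]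
          simp
        have hg : qpG Q q A ((n : ℝ) • zbar, (n : ℝ) • (A zbar))
            = ((n * c₀ : ℝ) : EReal) := by
          simp only [qpG, indE, hmem, if_pos, hquad]
          rw [real_inner_smul_right]
          norm_num
          rw [hc₀]
        rw [hg]
        apply le_of_eq
        rw [← EReal.coe_sub]
        norm_cast
        simp only [← Nat.cast_smul_eq_nsmul ℝ, real_inner_smul_left]
        ring
      set S := pConj (qpG Q q A) v with hS
      have hStop : S ≠ ⊤ := hv
      have hSbot : S ≠ ⊥ := by
        intro hSb
        have := hle 0
        rw [hSb] at this
        simp at this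
      lift S to ℝ using ⟨hStop, hSbot⟩ with M hM
      have hle' : ∀ n : ℕ,
          0 + n * (⟪zbar, v.1⟫_ℝ + ⟪A zbar, v.2⟫_ℝ - c₀) ≤ M := by
        intro n
        exact_mod_cast hle n
      have := coef_nonpos_aux hle'
      linarith
    -- combine
    show ⟪zbar, (u + v).1⟫_ℝ + ⟪A zbar, (u + v).2⟫_ℝ ≤ c₀
    simp only [Prod.fst_add, Prod.snd_add, inner_add_right]
    linarith
  intro h0
  have h0K : (0 : H₁ × H₂) ∈ K := closure_minimal hsub hKcl h0
  simp only [hK, Set.mem_setOf_eq, Prod.fst_zero, Prod.snd_zero, inner_zero_right] at h0K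
  linarith


end
end

section
/- Writing v_D = (v_D', v_D'') and v_P = (v_P', v_P'') and v = v_P + v_D = (v', v''), the following componentwise projection formulas hold: -v_D' = P_{rec B}(-v'), -v_D'' = P_{rec C}(-v''), -v_P' = P_{(rec B)°}(-v'), and -v_P'' = P_{(rec C)°}(-v''). -/
open scoped InnerProductSpace Pointwise Classical
open Filter Topology

noncomputable section

variable {H₁ H₂ : Type*} [NormedAddCommGroup H₁] [InnerProductSpace ℝ H₁]
  [NormedAddCommGroup H₂] [InnerProductSpace ℝ H₂]

-- ==== aux lemmas ====


lemma ereal_ne_top_iff (x : EReal) : x ≠ ⊤ ↔ ∃ M : ℝ, x ≤ (M : EReal) := by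
  constructor
  · intro h
    induction x with
    | bot => exact ⟨0, bot_le⟩
    | coe r => exact ⟨r, le_rfl⟩
    | top => exact absurd rfl h
  · rintro ⟨M, hM⟩ h
    rw [h] at hM
    exact absurd hM (by simp)

lemma fdom_qpF (B : Set H₁) (C : Set H₂) : fdom (qpF B C) = B ×ˢ C := by
  ext p
  by_cases h1 : p.1 ∈ B <;> by_cases h2 : p.2 ∈ C <;>
    simp [fdom, qpF, indE, h1, h2]

lemma fdom_qpG (Q : H₁ →L[ℝ] H₁) (q : H₁) (A : H₁ →L[ℝ] H₂) :
    fdom (qpG Q q A) = {p : H₁ × H₂ | A p.1 = p.2} := by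
  ext p
  by_cases h : A p.1 = p.2
  · simp only [fdom, qpG, indE, Set.mem_setOf_eq, h, if_true, add_zero]
    exact iff_of_true (EReal.coe_ne_top _) trivial
  · simp only [fdom, qpG, indE, Set.mem_setOf_eq, h, if_false]
    exact iff_of_false (not_not_intro (EReal.coe_add_top _)) (by simp)

lemma pconj_qpF_apply (B : Set H₁) (C : Set H₂) (u p : H₁ × H₂) :
    ((⟪p.1, u.1⟫_ℝ + ⟪p.2, u.2⟫_ℝ : ℝ) : EReal) - qpF B C p =
      if p.1 ∈ B ∧ p.2 ∈ C then ((⟪p.1, u.1⟫_ℝ + ⟪p.2, u.2⟫_ℝ : ℝ) : EReal) else ⊥ := by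
  by_cases h1 : p.1 ∈ B <;> by_cases h2 : p.2 ∈ C <;> simp [qpF, indE, h1, h2]

lemma pconj_qpG_apply (Q : H₁ →L[ℝ] H₁) (q : H₁) (A : H₁ →L[ℝ] H₂) (u p : H₁ × H₂) :
    ((⟪p.1, u.1⟫_ℝ + ⟪p.2, u.2⟫_ℝ : ℝ) : EReal) - qpG Q q A p =
      if A p.1 = p.2 then
        ((⟪p.1, u.1⟫_ℝ + ⟪p.2, u.2⟫_ℝ - (1 / 2 * ⟪p.1, Q p.1⟫_ℝ + ⟪q, p.1⟫_ℝ) : ℝ) : EReal)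
      else ⊥ := by
  by_cases h : A p.1 = p.2
  · rw [if_pos h]
    simp only [qpG, indE, Set.mem_setOf_eq, h, if_true, add_zero, ← EReal.coe_sub]
  · rw [if_neg h]
    simp only [qpG, indE, Set.mem_setOf_eq, h, if_false, EReal.coe_add_top]
    simp

lemma mem_fdom_pConj_qpF (B : Set H₁) (C : Set H₂) (u : H₁ × H₂) :
    u ∈ fdom (pConj (qpF B C)) ↔
      ∃ M : ℝ, ∀ b ∈ B, ∀ c ∈ C, ⟪b, u.1⟫_ℝ + ⟪c, u.2⟫_ℝ ≤ M := by
  show pConj (qpF B C) u ≠ ⊤ ↔ _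
  rw [ereal_ne_top_iff]
  unfold pConj
  constructor
  · rintro ⟨M, hM⟩
    refine ⟨M, fun b hb c hc => ?_⟩
    have hle := le_trans (le_iSup (fun p : H₁ × H₂ =>
      ((⟪p.1, u.1⟫_ℝ + ⟪p.2, u.2⟫_ℝ : ℝ) : EReal) - qpF B C p) (b, c)) hM
    rw [pconj_qpF_apply] at hle
    simp only [hb, hc, and_self, if_true] at hle
    exact_mod_cast hle
  · rintro ⟨M, hM⟩
    refine ⟨M, iSup_le fun p => ?_⟩
    rw [pconj_qpF_apply]
    split_ifs with h
    · exact_mod_cast hM p.1 h.1 p.2 h.2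
    · exact bot_le

lemma mem_fdom_pConj_qpG (Q : H₁ →L[ℝ] H₁) (q : H₁) (A : H₁ →L[ℝ] H₂) (u : H₁ × H₂) :
    u ∈ fdom (pConj (qpG Q q A)) ↔
      ∃ M : ℝ, ∀ z : H₁,
        ⟪z, u.1⟫_ℝ + ⟪A z, u.2⟫_ℝ - (1 / 2 * ⟪z, Q z⟫_ℝ + ⟪q, z⟫_ℝ) ≤ M := by
  show pConj (qpG Q q A) u ≠ ⊤ ↔ _
  rw [ereal_ne_top_iff]
  unfold pConj
  constructor
  · rintro ⟨M, hM⟩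
    refine ⟨M, fun z => ?_⟩
    have hle := le_trans (le_iSup (fun p : H₁ × H₂ =>
      ((⟪p.1, u.1⟫_ℝ + ⟪p.2, u.2⟫_ℝ : ℝ) : EReal) - qpG Q q A p) (z, A z)) hM
    rw [pconj_qpG_apply] at hle
    simp only [if_true] at hle
    exact_mod_cast hle
  · rintro ⟨M, hM⟩
    refine ⟨M, iSup_le fun p => ?_⟩
    rw [pconj_qpG_apply]
    split_ifs with h
    · have := hM p.1
      rw [h] at this
      exact_mod_cast this
    · exact bot_le

lemma minNorm_dir {S : Set (H₁ × H₂)} (hS : Convex ℝ S) {v : H₁ × H₂}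
    (hv : IsMinNormPointP (closure S) v) {d : H₁ × H₂}
    (hd : ∀ p ∈ S, p + d ∈ S) : 0 ≤ ⟪v.1, d.1⟫_ℝ + ⟪v.2, d.2⟫_ℝ := by
  have hvd : v + d ∈ closure S := by
    have hmt : Set.MapsTo (· + d) S S := hd
    exact hmt.closure (continuous_add_right d) hv.1
  set a := ⟪v.1, d.1⟫_ℝ + ⟪v.2, d.2⟫_ℝ with ha
  set b := ‖d.1‖ ^ 2 + ‖d.2‖ ^ 2 with hb
  have key : ∀ t : ℝ, 0 < t → t ≤ 1 → 0 ≤ 2 * t * a + t ^ 2 * b := by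
    intro t ht0 ht1
    have hw : v + t • d ∈ closure S := by
      have h1 := hS.closure hv.1 hvd (by linarith : (0:ℝ) ≤ 1 - t) ht0.le (by ring)
      have h2 : (1 - t) • v + t • (v + d) = v + t • d := by
        rw [smul_add, ← add_assoc, ← add_smul]
        simp
      rwa [h2] at h1
    have h2 := hv.2 _ hw
    have e1 : (v + t • d).1 = v.1 + t • d.1 := rfl
    have e2 : (v + t • d).2 = v.2 + t • d.2 := rfl
    rw [e1, e2, norm_add_sq_real, norm_add_sq_real, real_inner_smul_right,
      real_inner_smul_right, norm_smul, norm_smul] at h2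
    simp only [Real.norm_eq_abs, abs_of_pos ht0, mul_pow] at h2
    nlinarith [h2]
  by_contra hneg
  push_neg at hneg
  have hb0 : 0 ≤ b := by positivity
  rcases eq_or_lt_of_le hb0 with hb1 | hb1
  · have := key 1 one_pos le_rfl
    rw [← hb1] at this
    nlinarith
  · set t := min 1 (-a / b) with htdef
    have ht0 : 0 < t := lt_min one_pos (div_pos (neg_pos.2 hneg) hb1)
    have ht1 : t ≤ 1 := min_le_left _ _
    have htb : t * b ≤ -a := by
      rw [htdef]
      calc min 1 (-a / b) * b ≤ (-a / b) * b := by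
            apply mul_le_mul_of_nonneg_right (min_le_right _ _) hb0
        _ = -a := by field_simp
    have hk := key t ht0 ht1
    nlinarith [mul_le_mul_of_nonneg_left htb ht0.le]

lemma mem_recCone_of_support [CompleteSpace H₁] {B : Set H₁}
    (hBcl : IsClosed B) (hBcv : Convex ℝ B) {x : H₁}
    (hx : ∀ y : H₁, (∃ M : ℝ, ∀ b ∈ B, ⟪b, y⟫_ℝ ≤ M) → ⟪x, y⟫_ℝ ≤ 0) :
    x ∈ recCone B := by
  intro b hb
  by_contra hxb
  obtain ⟨f, u, hfb, hfx⟩ := geometric_hahn_banach_closed_point hBcv hBcl hxb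
  set y := (InnerProductSpace.toDual ℝ H₁).symm f with hy
  have hrep : ∀ z : H₁, ⟪z, y⟫_ℝ = f z := fun z => by
    rw [real_inner_comm]
    exact InnerProductSpace.toDual_symm_apply
  have h1 : ⟪x, y⟫_ℝ ≤ 0 := hx y ⟨u, fun b' hb' => (hrep b') ▸ (hfb b' hb').le⟩
  have h2 : f b < u := hfb b hb
  have h3 : f (x + b) = f x + f b := map_add f x b
  have h4 : f x ≤ 0 := by rw [← hrep x]; exact h1
  linarith [hfx, h3 ▸ hfx]

lemma isProjOn_of {H : Type*} [NormedAddCommGroup H] [InnerProductSpace ℝ H]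
    {S : Set H} {x p : H} (hp : p ∈ S) (h : ∀ w ∈ S, ⟪x - p, w - p⟫_ℝ ≤ 0) :
    IsProjOn S x p := by
  refine ⟨hp, fun w hw => ?_⟩
  have hid : x - w = (x - p) - (w - p) := by abel
  have hex : ‖(x - p) - (w - p)‖ ^ 2
      = ‖x - p‖ ^ 2 - 2 * ⟪x - p, w - p⟫_ℝ + ‖w - p‖ ^ 2 := norm_sub_sq_real _ _
  rw [dist_eq_norm, dist_eq_norm, hid]
  nlinarith [h w hw, norm_nonneg (x - p), norm_nonneg ((x - p) - (w - p)),
    sq_nonneg (‖w - p‖)]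

theorem componentwise_projection_formulas {H₁ H₂ : Type*}
    [NormedAddCommGroup H₁] [InnerProductSpace ℝ H₁] [FiniteDimensional ℝ H₁]
    [NormedAddCommGroup H₂] [InnerProductSpace ℝ H₂] [FiniteDimensional ℝ H₂]
    (Q : H₁ →L[ℝ] H₁) (hQsa : IsSelfAdjoint Q) (hQpos : ∀ z : H₁, 0 ≤ ⟪Q z, z⟫_ℝ)
    (q : H₁) (A : H₁ →L[ℝ] H₂)
    (B : Set H₁) (hBne : B.Nonempty) (hBcl : IsClosed B) (hBcv : Convex ℝ B)
    (C : Set H₂) (hCne : C.Nonempty) (hCcl : IsClosed C) (hCcv : Convex ℝ C)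
    (vP : H₁ × H₂) (hvP : IsMinNormPointP (closure (fdom (qpF B C) - fdom (qpG Q q A))) vP)
    (vD : H₁ × H₂)
    (hvD : IsMinNormPointP (closure (fdom (pConj (qpF B C)) + fdom (pConj (qpG Q q A)))) vD)
    : IsProjOn (recCone B) (-(vP.1 + vD.1)) (-vD.1) ∧
      IsProjOn (recCone C) (-(vP.2 + vD.2)) (-vD.2) ∧
      IsProjOn (polarCone (recCone B)) (-(vP.1 + vD.1)) (-vP.1) ∧
      IsProjOn (polarCone (recCone C)) (-(vP.2 + vD.2)) (-vP.2) := by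
  classical
  have hfF : fdom (qpF B C) = B ×ˢ C := fdom_qpF B C
  have hfG : fdom (qpG Q q A) = {p : H₁ × H₂ | A p.1 = p.2} := fdom_qpG Q q A
  -- convexity of the primal set
  have hGcv : Convex ℝ {p : H₁ × H₂ | A p.1 = p.2} := by
    intro p hp r hr a b ha hb hab
    simp only [Set.mem_setOf_eq] at hp hr ⊢
    have e1 : (a • p + b • r).1 = a • p.1 + b • r.1 := rfl
    have e2 : (a • p + b • r).2 = a • p.2 + b • r.2 := rfl
    rw [e1, e2, map_add, map_smul, map_smul, hp, hr]
  have hSPcv : Convex ℝ (fdom (qpF B C) - fdom (qpG Q q A)) := by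
    rw [hfF, hfG]
    exact Convex.sub (hBcv.prod hCcv) hGcv
  -- convexity of the dual set
  have hDFcv : Convex ℝ (fdom (pConj (qpF B C))) := by
    intro u hu u' hu' a b ha hb hab
    have hb' : b = 1 - a := by linarith
    subst hb'
    rw [mem_fdom_pConj_qpF] at hu hu' ⊢
    obtain ⟨M, hM⟩ := hu
    obtain ⟨M', hM'⟩ := hu'
    refine ⟨a * M + (1 - a) * M', fun x hx c hc => ?_⟩
    have e1 : (a • u + (1 - a) • u').1 = a • u.1 + (1 - a) • u'.1 := rfl
    have e2 : (a • u + (1 - a) • u').2 = a • u.2 + (1 - a) • u'.2 := rfl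
    rw [e1, e2, inner_add_right, inner_add_right, real_inner_smul_right,
      real_inner_smul_right, real_inner_smul_right, real_inner_smul_right]
    nlinarith [mul_le_mul_of_nonneg_left (hM x hx c hc) ha,
      mul_le_mul_of_nonneg_left (hM' x hx c hc) hb]
  have hDGcv : Convex ℝ (fdom (pConj (qpG Q q A))) := by
    intro u hu u' hu' a b ha hb hab
    have hb' : b = 1 - a := by linarith
    subst hb'
    rw [mem_fdom_pConj_qpG] at hu hu' ⊢
    obtain ⟨M, hM⟩ := hu
    obtain ⟨M', hM'⟩ := hu'
    refine ⟨a * M + (1 - a) * M', fun z => ?_⟩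
    have e1 : (a • u + (1 - a) • u').1 = a • u.1 + (1 - a) • u'.1 := rfl
    have e2 : (a • u + (1 - a) • u').2 = a • u.2 + (1 - a) • u'.2 := rfl
    rw [e1, e2, inner_add_right, inner_add_right, real_inner_smul_right,
      real_inner_smul_right, real_inner_smul_right, real_inner_smul_right]
    nlinarith [mul_le_mul_of_nonneg_left (hM z) ha,
      mul_le_mul_of_nonneg_left (hM' z) hb]
  have hSDcv : Convex ℝ (fdom (pConj (qpF B C)) + fdom (pConj (qpG Q q A))) :=
    Convex.add hDFcv hDGcv
  -- primal directions along the graph of A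
  have hgraph_dir : ∀ z : H₁, ∀ p ∈ fdom (qpF B C) - fdom (qpG Q q A),
      p + (z, A z) ∈ fdom (qpF B C) - fdom (qpG Q q A) := by
    intro z p hp
    rw [Set.mem_sub] at hp
    obtain ⟨x, hx, g, hg, rfl⟩ := hp
    have hg' : g - (z, A z) ∈ fdom (qpG Q q A) := by
      rw [hfG] at hg ⊢
      simp only [Set.mem_setOf_eq] at hg ⊢
      have e1 : (g - (z, A z)).1 = g.1 - z := rfl
      have e2 : (g - (z, A z)).2 = g.2 - A z := rfl
      rw [e1, e2, map_sub, hg]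
    have e : x - g + (z, A z) = x - (g - (z, A z)) := by abel
    rw [e]
    exact Set.sub_mem_sub hx hg'
  have hA1 : ∀ z : H₁, ⟪vP.1, z⟫_ℝ + ⟪vP.2, A z⟫_ℝ = 0 := by
    intro z
    have h1 : 0 ≤ ⟪vP.1, z⟫_ℝ + ⟪vP.2, A z⟫_ℝ :=
      minNorm_dir hSPcv hvP (hgraph_dir z)
    have h2 : 0 ≤ ⟪vP.1, -z⟫_ℝ + ⟪vP.2, A (-z)⟫_ℝ :=
      minNorm_dir hSPcv hvP (hgraph_dir (-z))
    rw [map_neg, inner_neg_right, inner_neg_right] at h2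
    linarith
  -- primal directions along recession cones
  have hrecB_dir : ∀ k ∈ recCone B, ∀ p ∈ fdom (qpF B C) - fdom (qpG Q q A),
      p + (k, 0) ∈ fdom (qpF B C) - fdom (qpG Q q A) := by
    intro k hk p hp
    rw [Set.mem_sub] at hp
    obtain ⟨x, hx, g, hg, rfl⟩ := hp
    have hx' : x + (k, (0 : H₂)) ∈ fdom (qpF B C) := by
      rw [hfF] at hx ⊢
      refine ⟨?_, ?_⟩
      · have : (x + (k, (0 : H₂))).1 = x.1 + k := rfl
        rw [this, add_comm]
        exact hk x.1 hx.1
      · have : (x + (k, (0 : H₂))).2 = x.2 + 0 := rfl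
        rw [this, add_zero]
        exact hx.2
    have e : x - g + (k, (0 : H₂)) = (x + (k, (0 : H₂))) - g := by abel
    rw [e]
    exact Set.sub_mem_sub hx' hg
  have hrecC_dir : ∀ k ∈ recCone C, ∀ p ∈ fdom (qpF B C) - fdom (qpG Q q A),
      p + ((0 : H₁), k) ∈ fdom (qpF B C) - fdom (qpG Q q A) := by
    intro k hk p hp
    rw [Set.mem_sub] at hp
    obtain ⟨x, hx, g, hg, rfl⟩ := hp
    have hx' : x + ((0 : H₁), k) ∈ fdom (qpF B C) := by
      rw [hfF] at hx ⊢
      refine ⟨?_, ?_⟩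
      · have : (x + ((0 : H₁), k)).1 = x.1 + 0 := rfl
        rw [this, add_zero]
        exact hx.1
      · have : (x + ((0 : H₁), k)).2 = x.2 + k := rfl
        rw [this, add_comm]
        exact hk x.2 hx.2
    have e : x - g + ((0 : H₁), k) = (x + ((0 : H₁), k)) - g := by abel
    rw [e]
    exact Set.sub_mem_sub hx' hg
  have hvPrecB : ∀ k ∈ recCone B, 0 ≤ ⟪vP.1, k⟫_ℝ := by
    intro k hk
    have h1 : 0 ≤ ⟪vP.1, k⟫_ℝ + ⟪vP.2, (0 : H₂)⟫_ℝ :=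
      minNorm_dir hSPcv hvP (hrecB_dir k hk)
    rw [inner_zero_right] at h1
    linarith
  have hvPrecC : ∀ k ∈ recCone C, 0 ≤ ⟪vP.2, k⟫_ℝ := by
    intro k hk
    have h1 : 0 ≤ ⟪vP.1, (0 : H₁)⟫_ℝ + ⟪vP.2, k⟫_ℝ :=
      minNorm_dir hSPcv hvP (hrecC_dir k hk)
    rw [inner_zero_right] at h1
    linarith
  -- dual directions
  have hdomF_dir1 : ∀ y : H₁, (∃ M : ℝ, ∀ b ∈ B, ⟪b, y⟫_ℝ ≤ M) →
      ∀ p ∈ fdom (pConj (qpF B C)) + fdom (pConj (qpG Q q A)),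
      p + (y, (0 : H₂)) ∈ fdom (pConj (qpF B C)) + fdom (pConj (qpG Q q A)) := by
    rintro y ⟨M, hM⟩ p hp
    rw [Set.mem_add] at hp
    obtain ⟨x, hx, g, hg, rfl⟩ := hp
    have hx' : x + (y, (0 : H₂)) ∈ fdom (pConj (qpF B C)) := by
      rw [mem_fdom_pConj_qpF] at hx ⊢
      obtain ⟨Mx, hMx⟩ := hx
      refine ⟨Mx + M, fun b hb c hc => ?_⟩
      have e1 : (x + (y, (0 : H₂))).1 = x.1 + y := rfl
      have e2 : (x + (y, (0 : H₂))).2 = x.2 + 0 := rfl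
      rw [e1, e2, add_zero, inner_add_right]
      linarith [hMx b hb c hc, hM b hb]
    have e : x + g + (y, (0 : H₂)) = (x + (y, (0 : H₂))) + g := by abel
    rw [e]
    exact Set.add_mem_add hx' hg
  have hdomF_dir2 : ∀ y : H₂, (∃ M : ℝ, ∀ c ∈ C, ⟪c, y⟫_ℝ ≤ M) →
      ∀ p ∈ fdom (pConj (qpF B C)) + fdom (pConj (qpG Q q A)),
      p + ((0 : H₁), y) ∈ fdom (pConj (qpF B C)) + fdom (pConj (qpG Q q A)) := by
    rintro y ⟨M, hM⟩ p hp
    rw [Set.mem_add] at hp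
    obtain ⟨x, hx, g, hg, rfl⟩ := hp
    have hx' : x + ((0 : H₁), y) ∈ fdom (pConj (qpF B C)) := by
      rw [mem_fdom_pConj_qpF] at hx ⊢
      obtain ⟨Mx, hMx⟩ := hx
      refine ⟨Mx + M, fun b hb c hc => ?_⟩
      have e1 : (x + ((0 : H₁), y)).1 = x.1 + 0 := rfl
      have e2 : (x + ((0 : H₁), y)).2 = x.2 + y := rfl
      rw [e1, e2, add_zero, inner_add_right]
      linarith [hMx b hb c hc, hM c hc]
    have e : x + g + ((0 : H₁), y) = (x + ((0 : H₁), y)) + g := by abel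
    rw [e]
    exact Set.add_mem_add hx' hg
  have hdomG_dir : ∀ μ : H₂,
      ∀ p ∈ fdom (pConj (qpF B C)) + fdom (pConj (qpG Q q A)),
      p + (-(ContinuousLinearMap.adjoint A μ), μ) ∈
        fdom (pConj (qpF B C)) + fdom (pConj (qpG Q q A)) := by
    intro μ p hp
    rw [Set.mem_add] at hp
    obtain ⟨x, hx, g, hg, rfl⟩ := hp
    have hg' : g + (-(ContinuousLinearMap.adjoint A μ), μ) ∈ fdom (pConj (qpG Q q A)) := by
      rw [mem_fdom_pConj_qpG] at hg ⊢
      obtain ⟨M, hM⟩ := hg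
      refine ⟨M, fun z => ?_⟩
      have e1 : (g + (-(ContinuousLinearMap.adjoint A μ), μ)).1
          = g.1 + -(ContinuousLinearMap.adjoint A μ) := rfl
      have e2 : (g + (-(ContinuousLinearMap.adjoint A μ), μ)).2 = g.2 + μ := rfl
      rw [e1, e2, inner_add_right, inner_add_right, inner_neg_right,
        ContinuousLinearMap.adjoint_inner_right]
      linarith [hM z]
    have e : x + g + (-(ContinuousLinearMap.adjoint A μ), μ)
        = x + (g + (-(ContinuousLinearMap.adjoint A μ), μ)) := by abel
    rw [e]
    exact Set.add_mem_add hx hg'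
  have hvD_B : ∀ y : H₁, (∃ M : ℝ, ∀ b ∈ B, ⟪b, y⟫_ℝ ≤ M) → 0 ≤ ⟪vD.1, y⟫_ℝ := by
    intro y hy
    have h1 : 0 ≤ ⟪vD.1, y⟫_ℝ + ⟪vD.2, (0 : H₂)⟫_ℝ :=
      minNorm_dir hSDcv hvD (hdomF_dir1 y hy)
    rw [inner_zero_right] at h1
    linarith
  have hvD_C : ∀ y : H₂, (∃ M : ℝ, ∀ c ∈ C, ⟪c, y⟫_ℝ ≤ M) → 0 ≤ ⟪vD.2, y⟫_ℝ := by
    intro y hy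
    have h1 : 0 ≤ ⟪vD.1, (0 : H₁)⟫_ℝ + ⟪vD.2, y⟫_ℝ :=
      minNorm_dir hSDcv hvD (hdomF_dir2 y hy)
    rw [inner_zero_right] at h1
    linarith
  have hA2 : ∀ μ : H₂, ⟪vD.2, μ⟫_ℝ = ⟪vD.1, ContinuousLinearMap.adjoint A μ⟫_ℝ := by
    intro μ
    have h1 : 0 ≤ ⟪vD.1, -(ContinuousLinearMap.adjoint A μ)⟫_ℝ + ⟪vD.2, μ⟫_ℝ :=
      minNorm_dir hSDcv hvD (hdomG_dir μ)
    have h2 : 0 ≤ ⟪vD.1, -(ContinuousLinearMap.adjoint A (-μ))⟫_ℝ + ⟪vD.2, -μ⟫_ℝ :=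
      minNorm_dir hSDcv hvD (hdomG_dir (-μ))
    rw [inner_neg_right] at h1
    rw [map_neg, neg_neg, inner_neg_right] at h2
    linarith
  have hvD2eq : vD.2 = A vD.1 := by
    have hz : ∀ μ : H₂, ⟪vD.2 - A vD.1, μ⟫_ℝ = 0 := by
      intro μ
      have h1 := hA2 μ
      have h2 : ⟪vD.1, ContinuousLinearMap.adjoint A μ⟫_ℝ = ⟪A vD.1, μ⟫_ℝ := by
        rw [real_inner_comm, ContinuousLinearMap.adjoint_inner_left, real_inner_comm]
      rw [inner_sub_left]
      linarith
    have h0 := hz (vD.2 - A vD.1)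
    rw [inner_self_eq_zero] at h0
    exact sub_eq_zero.mp h0
  -- recession cone memberships
  have hrecB : -vD.1 ∈ recCone B :=
    mem_recCone_of_support hBcl hBcv (fun y hy => by
      rw [inner_neg_left]
      linarith [hvD_B y hy])
  have hrecC : -vD.2 ∈ recCone C :=
    mem_recCone_of_support hCcl hCcv (fun y hy => by
      rw [inner_neg_left]
      linarith [hvD_C y hy])
  -- polar cone memberships
  have hpolB : -vP.1 ∈ polarCone (recCone B) := by
    intro k hk
    rw [inner_neg_right, real_inner_comm]
    linarith [hvPrecB k hk]
  have hpolC : -vP.2 ∈ polarCone (recCone C) := by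
    intro k hk
    rw [inner_neg_right, real_inner_comm]
    linarith [hvPrecC k hk]
  -- orthogonality
  have hsum0 : ⟪vP.1, vD.1⟫_ℝ + ⟪vP.2, vD.2⟫_ℝ = 0 := by
    have := hA1 vD.1
    rw [hvD2eq]
    linarith
  have hc1 : ⟪vP.1, vD.1⟫_ℝ ≤ 0 := by
    have := hvPrecB _ hrecB
    rw [inner_neg_right] at this
    linarith
  have hc2 : ⟪vP.2, vD.2⟫_ℝ ≤ 0 := by
    have := hvPrecC _ hrecC
    rw [inner_neg_right] at this
    linarith
  have he1 : ⟪vP.1, vD.1⟫_ℝ = 0 := by linarith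
  have he2 : ⟪vP.2, vD.2⟫_ℝ = 0 := by linarith
  refine ⟨?_, ?_, ?_, ?_⟩
  · refine isProjOn_of hrecB (fun w hw => ?_)
    have e : -(vP.1 + vD.1) - -vD.1 = -vP.1 := by abel
    have e2 : w - -vD.1 = w + vD.1 := sub_neg_eq_add w vD.1
    rw [e, e2, inner_add_right, inner_neg_left, inner_neg_left]
    linarith [hvPrecB w hw, he1]
  · refine isProjOn_of hrecC (fun w hw => ?_)
    have e : -(vP.2 + vD.2) - -vD.2 = -vP.2 := by abel
    have e2 : w - -vD.2 = w + vD.2 := sub_neg_eq_add w vD.2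
    rw [e, e2, inner_add_right, inner_neg_left, inner_neg_left]
    linarith [hvPrecC w hw, he2]
  · refine isProjOn_of hpolB (fun w hw => ?_)
    have e : -(vP.1 + vD.1) - -vP.1 = -vD.1 := by abel
    have e2 : w - -vP.1 = w + vP.1 := sub_neg_eq_add w vP.1
    rw [e, e2, inner_add_right]
    have h1 : ⟪-vD.1, w⟫_ℝ ≤ 0 := hw (-vD.1) hrecB
    have h2 : ⟪-vD.1, vP.1⟫_ℝ = 0 := by
      rw [inner_neg_left, real_inner_comm]
      simp [he1]
    linarith
  · refine isProjOn_of hpolC (fun w hw => ?_)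
    have e : -(vP.2 + vD.2) - -vP.2 = -vD.2 := by abel
    have e2 : w - -vP.2 = w + vP.2 := sub_neg_eq_add w vP.2
    rw [e, e2, inner_add_right]
    have h1 : ⟪-vD.2, w⟫_ℝ ≤ 0 := hw (-vD.2) hrecC
    have h2 : ⟪-vD.2, vP.2⟫_ℝ = 0 := by
      rw [inner_neg_left, real_inner_comm]
      simp [he2]
    linarith


end
end
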